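/- If φ is an automorphism of the line combinatorics 𝒞 with φ(M₁) = M₁ and φ(M₂) = M₂, then φ is the identity. -/
import Mathlib


/-! The line combinatorics `𝒞`. Lines are indexed by `Fin 5 ⊕ Fin 5`, where
`Sum.inl i` is the line `L_{i+1}` and `Sum.inr i` is the line `M_{i+1}`
(`0`-based indices for the paper's `1`-based labels). -/

/-- The ten lines of the combinatorics `𝒞`: `Sum.inl i = L_{i+1}`, `Sum.inr i = M_{i+1}`. -/
abbrev LineC := Fin 5 ⊕ Fin 5

/-- The table `T` of concurrent triples `{M_i, L_j, L_k}` (0-based indices): it encodes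
`(1,{2,5}), (1,{3,4}), (2,{1,3}), (2,{4,5}), (3,{1,5}), (3,{2,4}), (4,{1,2}),
(4,{3,5}), (5,{1,4}), (5,{2,3})` in the paper's 1-based labels. -/
def TTable : List (Fin 5 × Fin 5 × Fin 5) :=
  [(0,1,4), (0,2,3), (1,0,2), (1,3,4), (2,0,4), (2,1,3), (3,0,1), (3,2,4), (4,0,3), (4,1,2)]

/-- `Conc a b c` holds iff `a`, `b`, `c` are three distinct lines of `𝒞` which are
concurrent: either all three are of type `M` (all of `M₁,…,M₅` pass through the common
point `O`), or `{a,b,c} = {M_i, L_j, L_k}` for a triple `(i,{j,k})` in the table `T`. -/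
def Conc (a b c : LineC) : Prop :=
  a ≠ b ∧ a ≠ c ∧ b ≠ c ∧
    ((∃ i j k, a = Sum.inr i ∧ b = Sum.inr j ∧ c = Sum.inr k) ∨
     (∃ i j k, (i, j, k) ∈ TTable ∧
        ({a, b, c} : Finset LineC) = {Sum.inr i, Sum.inl j, Sum.inl k}))

/-- An automorphism of the line combinatorics `𝒞` is a bijection of the ten lines such
that any three lines are concurrent iff their images are concurrent. -/
def IsAut (φ : Equiv.Perm LineC) : Prop :=
  ∀ a b c, Conc a b c ↔ Conc (φ a) (φ b) (φ c)

instance instDecConc (a b c : LineC) : Decidable (Conc a b c) := by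
  unfold Conc; infer_instance

set_option maxRecDepth 1000000 in
set_option maxHeartbeats 2000000 in
lemma concM_aux : ∀ i : Fin 5, i ≠ 0 → i ≠ 1 → Conc (Sum.inr 0) (Sum.inr 1) (Sum.inr i) := by
  decide

set_option maxRecDepth 1000000 in
set_option maxHeartbeats 2000000 in
lemma onlyM_aux : ∀ c : LineC, Conc (Sum.inr 0) (Sum.inr 1) c → ∃ j, c = Sum.inr j := by
  decide

set_option maxRecDepth 1000000 in
set_option maxHeartbeats 2000000 in
lemma concT_aux : ∀ p ∈ TTable, Conc (Sum.inr p.1) (Sum.inl p.2.1) (Sum.inl p.2.2) := by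
  decide

set_option maxRecDepth 1000000 in
set_option maxHeartbeats 2000000 in
lemma invT_aux : ∀ i j k : Fin 5, Conc (Sum.inr i) (Sum.inl j) (Sum.inl k) →
    (i, j, k) ∈ TTable ∨ (i, k, j) ∈ TTable := by
  decide

set_option maxRecDepth 2000000 in
set_option maxHeartbeats 4000000 in
set_option synthInstance.maxHeartbeats 2000000 in
set_option synthInstance.maxSize 4000 in
lemma final_aux : ∀ σ τ : Equiv.Perm (Fin 5), τ 0 = 0 → τ 1 = 1 →
    (∀ p ∈ TTable,
      ((τ p.1, σ p.2.1, σ p.2.2) ∈ TTable ∨ (τ p.1, σ p.2.2, σ p.2.1) ∈ TTable)) →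
    ∀ x, σ x = x ∧ τ x = x := by
  decide

/-- If an automorphism `φ` of the line combinatorics `𝒞` satisfies `φ(M₁) = M₁` and
`φ(M₂) = M₂`, then `φ` is the identity. -/
theorem stmt_7 (φ : Equiv.Perm LineC) (hφ : IsAut φ)
    (h1 : φ (Sum.inr 0) = Sum.inr 0) (h2 : φ (Sum.inr 1) = Sum.inr 1) :
    φ = Equiv.refl LineC := by
  -- every M-line is sent to an M-line
  have hM : ∀ i : Fin 5, ∃ j, φ (Sum.inr i) = Sum.inr j := by
    intro i
    by_cases hi0 : i = 0
    · exact ⟨0, hi0 ▸ h1⟩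
    by_cases hi1 : i = 1
    · exact ⟨1, hi1 ▸ h2⟩
    have h := (hφ (Sum.inr 0) (Sum.inr 1) (Sum.inr i)).mp (concM_aux i hi0 hi1)
    rw [h1, h2] at h
    exact onlyM_aux _ h
  -- the induced map on M-indices
  set g : Fin 5 → Fin 5 := fun i => Sum.elim id id (φ (Sum.inr i)) with hgdef
  have hg : ∀ i, φ (Sum.inr i) = Sum.inr (g i) := by
    intro i
    obtain ⟨j, hj⟩ := hM i
    rw [hgdef]
    simp [hj]
  have ginj : Function.Injective g := by
    intro i j hij
    have : φ (Sum.inr i) = φ (Sum.inr j) := by rw [hg i, hg j, hij]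
    exact Sum.inr_injective (φ.injective this)
  have gbij : Function.Bijective g := Finite.injective_iff_bijective.mp ginj
  -- every L-line is sent to an L-line
  have hL : ∀ i : Fin 5, ∃ j, φ (Sum.inl i) = Sum.inl j := by
    intro i
    rcases hx : φ (Sum.inl i) with j | j
    · exact ⟨j, rfl⟩
    · obtain ⟨k, hk⟩ := gbij.surjective j
      have : φ (Sum.inl i) = φ (Sum.inr k) := by rw [hx, hg k, hk]
      exact absurd (φ.injective this) (by simp)
  -- the induced map on L-indices
  set f : Fin 5 → Fin 5 := fun i => Sum.elim id id (φ (Sum.inl i)) with hfdef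
  have hf : ∀ i, φ (Sum.inl i) = Sum.inl (f i) := by
    intro i
    obtain ⟨j, hj⟩ := hL i
    rw [hfdef]
    simp [hj]
  have finj : Function.Injective f := by
    intro i j hij
    have : φ (Sum.inl i) = φ (Sum.inl j) := by rw [hf i, hf j, hij]
    exact Sum.inl_injective (φ.injective this)
  have fbij : Function.Bijective f := Finite.injective_iff_bijective.mp finj
  set σ : Equiv.Perm (Fin 5) := Equiv.ofBijective f fbij with hσdef
  set τ : Equiv.Perm (Fin 5) := Equiv.ofBijective g gbij with hτdef
  have hτ0 : τ 0 = 0 := by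
    have := hg 0
    rw [h1] at this
    exact (Sum.inr_injective this).symm
  have hτ1 : τ 1 = 1 := by
    have := hg 1
    rw [h2] at this
    exact (Sum.inr_injective this).symm
  have hcond : ∀ p ∈ TTable,
      ((τ p.1, σ p.2.1, σ p.2.2) ∈ TTable ∨ (τ p.1, σ p.2.2, σ p.2.1) ∈ TTable) := by
    intro p hp
    have h := (hφ _ _ _).mp (concT_aux p hp)
    rw [hg, hf, hf] at h
    exact invT_aux _ _ _ h
  have key := final_aux σ τ hτ0 hτ1 hcond
  ext x
  cases x with
  | inl i =>
      show φ (Sum.inl i) = Sum.inl i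
      rw [hf i]
      exact congrArg Sum.inl (key i).1
  | inr i =>
      show φ (Sum.inr i) = Sum.inr i
      rw [hg i]
      exact congrArg Sum.inr (key i).2
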